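/- With Q = S_ψ ∘ O as in the Grover iteration acting as rotation by 2α in span{ψ₀, ψ₁}, for all k ∈ ℕ: Q^k(cos(a)·ψ₀ + sin(a)·ψ₁) = cos(a + 2kα)·ψ₀ + sin(a + 2kα)·ψ₁. -/

import Mathlib

open Real Set

lemma grover_step {H : Type*} [NormedAddCommGroup H] [InnerProductSpace ℂ H]
    [FiniteDimensional ℂ H]
    (K : Submodule ℂ H) (ψ₀ ψ₁ : H)
    (hψ₀ : ψ₀ ∈ K) (hψ₁ : ψ₁ ∈ Kᗮ) (h0 : ‖ψ₀‖ = 1) (h1 : ‖ψ₁‖ = 1)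
    (α a : ℝ) :
    (2 : ℂ) • ((inner ℂ (Real.cos α • ψ₀ + Real.sin α • ψ₁)
        ((Submodule.orthogonalProjectionOnto K (Real.cos a • ψ₀ + Real.sin a • ψ₁) : H)
          - (Submodule.orthogonalProjectionOnto Kᗮ (Real.cos a • ψ₀ + Real.sin a • ψ₁) : H)) : ℂ)
        • (Real.cos α • ψ₀ + Real.sin α • ψ₁))
      - ((Submodule.orthogonalProjectionOnto K (Real.cos a • ψ₀ + Real.sin a • ψ₁) : H)
          - (Submodule.orthogonalProjectionOnto Kᗮ (Real.cos a • ψ₀ + Real.sin a • ψ₁) : H))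
      = Real.cos (a + 2 * α) • ψ₀ + Real.sin (a + 2 * α) • ψ₁ := by
  have hψ₀' : ψ₀ ∈ Kᗮᗮ := Submodule.le_orthogonal_orthogonal K hψ₀
  simp only [RCLike.real_smul_eq_coe_smul (K := ℂ)]
  have pK : ∀ c s : ℂ, (Submodule.orthogonalProjectionOnto K (c • ψ₀ + s • ψ₁) : H)
      = c • ψ₀ := by
    intro c s
    rw [map_add, map_smul, map_smul,
      Submodule.orthogonalProjectionOnto_apply_of_mem_orthogonal hψ₁]
    push_cast
    rw [show ((Submodule.orthogonalProjectionOnto K ψ₀ : H)) = ψ₀ from Submodule.starProjection_eq_self_iff.2 hψ₀]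
    simp
  have pKo : ∀ c s : ℂ, (Submodule.orthogonalProjectionOnto Kᗮ (c • ψ₀ + s • ψ₁) : H)
      = s • ψ₁ := by
    intro c s
    rw [map_add, map_smul, map_smul,
      Submodule.orthogonalProjectionOnto_apply_of_mem_orthogonal hψ₀']
    push_cast
    rw [show ((Submodule.orthogonalProjectionOnto Kᗮ ψ₁ : H)) = ψ₁ from Submodule.starProjection_eq_self_iff.2 hψ₁]
    simp
  simp only [pK, pKo]
  have h01 : (inner ℂ ψ₀ ψ₁ : ℂ) = 0 := Submodule.inner_right_of_mem_orthogonal hψ₀ hψ₁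
  have h10 : (inner ℂ ψ₁ ψ₀ : ℂ) = 0 := Submodule.inner_left_of_mem_orthogonal hψ₀ hψ₁
  have h00 : (inner ℂ ψ₀ ψ₀ : ℂ) = 1 := by
    rw [inner_self_eq_norm_sq_to_K, h0]; norm_num
  have h11 : (inner ℂ ψ₁ ψ₁ : ℂ) = 1 := by
    rw [inner_self_eq_norm_sq_to_K, h1]; norm_num
  have hin : ∀ c s c' s' : ℂ, (inner ℂ (c • ψ₀ + s • ψ₁) (c' • ψ₀ - s' • ψ₁) : ℂ)
      = starRingEnd ℂ c * c' - starRingEnd ℂ s * s' := by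
    intro c s c' s'
    simp only [inner_add_left, inner_sub_right, inner_smul_left, inner_smul_right,
      h01, h10, h00, h11]
    ring
  simp only [hin, Complex.conj_ofReal, RCLike.conj_ofReal]
  have c1 : Real.cos (a + 2 * α)
      = 2 * (Real.cos α * Real.cos a - Real.sin α * Real.sin a) * Real.cos α - Real.cos a := by
    rw [Real.cos_add, Real.cos_two_mul, Real.sin_two_mul]
    nlinarith [Real.sin_sq_add_cos_sq α]
  have c2 : Real.sin (a + 2 * α)
      = 2 * (Real.cos α * Real.cos a - Real.sin α * Real.sin a) * Real.sin α + Real.sin a := by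
    rw [Real.sin_add, Real.cos_two_mul, Real.sin_two_mul]
    linear_combination (2 * Real.sin a) * Real.sin_sq_add_cos_sq α
  rw [c1, c2]
  push_cast
  module

theorem stmt_15 {H : Type*} [NormedAddCommGroup H] [InnerProductSpace ℂ H]
    [FiniteDimensional ℂ H]
    (K : Submodule ℂ H) (ψ₀ ψ₁ : H)
    (hψ₀ : ψ₀ ∈ K) (hψ₁ : ψ₁ ∈ Kᗮ) (h0 : ‖ψ₀‖ = 1) (h1 : ‖ψ₁‖ = 1)
    (α : ℝ) (hα : α ∈ Ioo 0 (π / 2)) (a : ℝ) (k : ℕ) :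
    let ψ : H := Real.cos α • ψ₀ + Real.sin α • ψ₁
    let O : H → H := fun x =>
      ((Submodule.orthogonalProjectionOnto K x : H) - (Submodule.orthogonalProjectionOnto Kᗮ x : H))
    let S : H → H := fun x => (2 : ℂ) • ((inner ℂ ψ x : ℂ) • ψ) - x
    let Q : H → H := S ∘ O
    Q^[k] (Real.cos a • ψ₀ + Real.sin a • ψ₁)
      = Real.cos (a + 2 * k * α) • ψ₀ + Real.sin (a + 2 * k * α) • ψ₁ := by
  intro ψ O S Q
  induction k generalizing a with
  | zero => simp
  | succ n ih =>
    rw [Function.iterate_succ_apply]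
    have hQ : Q (Real.cos a • ψ₀ + Real.sin a • ψ₁)
        = Real.cos (a + 2 * α) • ψ₀ + Real.sin (a + 2 * α) • ψ₁ := by
      show S (O (Real.cos a • ψ₀ + Real.sin a • ψ₁)) = _
      show (2 : ℂ) • ((inner ℂ ψ _ : ℂ) • ψ) - _ = _
      exact grover_step K ψ₀ ψ₁ hψ₀ hψ₁ h0 h1 α a
    rw [hQ, ih (a + 2 * α)]
    have : a + 2 * α + 2 * (n : ℝ) * α = a + 2 * ((n : ℕ) + 1 : ℕ) * α := by
      push_cast; ring
    rw [this]
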